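/- arXiv:1410.5156 — 3 statements merged into one kernel-verified Lean document; each statement's English description precedes it below -/
import Mathlib

section
/- Let p : M' → M be a covering map of topological spaces with M' nonempty, connected and locally path-connected, and let G be a path-connected, locally path-connected topological group with identity element e. Let θ : M × G → M be a continuous right action of G on M (so θ(x,e) = x and θ(θ(x,g),h) = θ(x,gh) for all x ∈ M and g,h ∈ G). Assume that for every point x ∈ M the orbit map G → M, g ↦ θ(x,g), induces the trivial homomorphism of fundamental groups π₁(G,e) → π₁(M,x). Then there exists a unique continuous map θ' : M' × G → M' such that (i) p(θ'(z,g)) = θ(p(z),g) for all z ∈ M', g ∈ G, and (ii) θ' is a right action of G on M' (θ'(z,e) = z and θ'(θ'(z,g),h) = θ'(z,gh) for all z, g, h). -/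
open Set Topology unitInterval Metric

namespace CoveringLiftAux

variable {E X : Type*} [TopologicalSpace E] [TopologicalSpace X] {p : E → X}
variable [∀ x : X, Nonempty ↥(p ⁻¹' {x})]

/-- The trivialization of the covering map `p` at `x`. -/
noncomputable def triv (hp : IsCoveringMap p) (x : X) : Bundle.Trivialization (↥(p ⁻¹' {x})) p :=
  (hp x).toTrivialization

theorem mem_triv_baseSet (hp : IsCoveringMap p) (x : X) : x ∈ (triv hp x).baseSet :=
  (hp x).mem_toTrivialization_baseSet

/-- Sheet coordinate is constant along continuous partial sections over the base set. -/
theorem snd_const (hp : IsCoveringMap p) (x : X) {A : Type*} [TopologicalSpace A]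
    [PreconnectedSpace A] {g : A → E} (hg : Continuous g)
    (hmem : ∀ a, p (g a) ∈ (triv hp x).baseSet) (a b : A) :
    ((triv hp x) (g a)).2 = ((triv hp x) (g b)).2 := by
  haveI : DiscreteTopology ↥(p ⁻¹' {x}) := (hp x).1
  have hcont : Continuous fun a => ((triv hp x) (g a)).2 := by
    have h1 : Continuous fun a => (triv hp x) (g a) :=
      (triv hp x).toOpenPartialHomeomorph.continuousOn.comp_continuous hg
        (fun a => (triv hp x).mem_source.mpr (hmem a))
    exact continuous_snd.comp h1
  exact PreconnectedSpace.constant inferInstance hcont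

theorem symm_mk (hp : IsCoveringMap p) (x : X) {e : E}
    (he : p e ∈ (triv hp x).baseSet) :
    (triv hp x).toOpenPartialHomeomorph.symm (p e, ((triv hp x) e).2) = e := by
  have h1 : ((p e, ((triv hp x) e).2) : X × ↥(p ⁻¹' {x})) = (triv hp x) e :=
    (triv hp x).mk_proj_snd' he
  rw [h1]
  exact (triv hp x).toOpenPartialHomeomorph.left_inv ((triv hp x).mem_source.mpr he)

theorem eq_of_snd_eq (hp : IsCoveringMap p) (x : X) {e₁ e₂ : E}
    (h₁ : p e₁ ∈ (triv hp x).baseSet) (h₂ : p e₂ ∈ (triv hp x).baseSet)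
    (hp12 : p e₁ = p e₂) (hsnd : ((triv hp x) e₁).2 = ((triv hp x) e₂).2) : e₁ = e₂ := by
  have := symm_mk hp x h₁
  rw [hp12, hsnd, symm_mk hp x h₂] at this
  exact this.symm

/-- Existence of path lifts along a covering map. -/
theorem exists_path_lift (hp : IsCoveringMap p) (γ : I → X) (hγ : Continuous γ)
    (e₀ : E) (he₀ : p e₀ = γ 0) :
    ∃ Γ : I → E, Continuous Γ ∧ Γ 0 = e₀ ∧ ∀ t, p (Γ t) = γ t := by
  classical
  set S : Set I := {t | ∃ Γ : I → E, Continuous Γ ∧ Γ 0 = e₀ ∧ ∀ u ≤ t, p (Γ u) = γ u} with hSdef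
  have hmono : ∀ {t t' : I}, t' ≤ t → t ∈ S → t' ∈ S := by
    rintro t t' h ⟨Γ, hc, h0, hl⟩
    exact ⟨Γ, hc, h0, fun u hu => hl u (hu.trans h)⟩
  have hext : ∀ (x : X) (t₁ t₂ : I), t₁ ∈ S → t₁ ≤ t₂ →
      (∀ u, t₁ ≤ u → u ≤ t₂ → γ u ∈ (triv hp x).baseSet) → t₂ ∈ S := by
    intro x t₁ t₂ ht₁ h12 hbs
    obtain ⟨Γ, hc, h0, hl⟩ := ht₁
    set T := triv hp x with hT
    have he₁ : p (Γ t₁) ∈ T.baseSet := by rw [hl t₁ le_rfl]; exact hbs t₁ le_rfl h12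
    set c := (T (Γ t₁)).2 with hc'
    refine ⟨fun u => if u ≤ t₁ then Γ u else T.toOpenPartialHomeomorph.symm (γ (min u t₂), c),
      ?_, ?_, ?_⟩
    · apply continuous_if_le continuous_id continuous_const hc.continuousOn
      · have hinner : Continuous fun u : I => ((γ (min u t₂), c) : X × ↥(p ⁻¹' {x})) :=
          (hγ.comp (continuous_id.min continuous_const)).prodMk continuous_const
        refine T.toOpenPartialHomeomorph.symm.continuousOn.comp hinner.continuousOn ?_
        intro u hu
        rw [OpenPartialHomeomorph.symm_source]
        exact (T.mem_target (x := (γ (min u t₂), c))).mpr (hbs _ (le_min hu h12) (min_le_right _ _))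
      · intro u hu
        simp only [id_eq] at hu
        rw [hu, min_eq_left h12, ← hl t₁ le_rfl]
        exact (symm_mk hp x he₁).symm
    · show (if (0:I) ≤ t₁ then Γ 0 else _) = e₀
      rw [if_pos (nonneg' : (0:I) ≤ t₁)]; exact h0
    · intro u hu
      show p (if u ≤ t₁ then Γ u else _) = γ u
      by_cases h : u ≤ t₁
      · rw [if_pos h]; exact hl u h
      · rw [if_neg h]
        push_neg at h
        have hu1 : t₁ ≤ u := h.le
        have hmem : γ (min u t₂) ∈ T.baseSet := hbs _ (le_min hu1 h12) (min_le_right _ _)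
        have := T.proj_symm_apply ((T.mem_target (x := (γ (min u t₂), c))).mpr hmem)
        rw [this, min_eq_left hu]
  have h0S : (0 : I) ∈ S := by
    refine ⟨fun _ => e₀, continuous_const, rfl, fun u hu => ?_⟩
    have : u = 0 := le_antisymm hu nonneg'
    rw [this]; exact he₀
  have hnhds : ∀ t : I, ∃ ε > 0, ∀ v : I, dist v t < ε → γ v ∈ (triv hp (γ t)).baseSet := by
    intro t
    have := hγ.continuousAt (x := t) |>.preimage_mem_nhds
      (((triv hp (γ t)).open_baseSet).mem_nhds (mem_triv_baseSet hp (γ t)))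
    obtain ⟨ε, hε0, hball⟩ := Metric.mem_nhds_iff.mp this
    exact ⟨ε, hε0, fun v hv => hball (mem_ball.mpr hv)⟩
  have hopen : IsOpen S := by
    rw [Metric.isOpen_iff]
    intro t ht
    obtain ⟨ε, hε0, hball⟩ := hnhds t
    refine ⟨ε, hε0, fun u hu => ?_⟩
    rcases le_total u t with h | h
    · exact hmono h ht
    · refine hext (γ t) t u ht h fun v hv1 hv2 => hball v ?_
      have h1 : dist v t ≤ dist u t := by
        rw [Subtype.dist_eq, Subtype.dist_eq, Real.dist_eq, Real.dist_eq,
          abs_of_nonneg (sub_nonneg.mpr (Subtype.coe_le_coe.mpr hv1)),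
          abs_of_nonneg (sub_nonneg.mpr (Subtype.coe_le_coe.mpr h))]
        have := Subtype.coe_le_coe.mpr hv2
        linarith
      exact lt_of_le_of_lt h1 (mem_ball.mp hu)
  have hclosed : IsClosed S := by
    refine isClosed_of_closure_subset fun t ht => ?_
    obtain ⟨ε, hε0, hball⟩ := hnhds t
    obtain ⟨u, huS, hut⟩ := Metric.mem_closure_iff.mp ht ε hε0
    rcases le_total t u with h | h
    · exact hmono h huS
    · refine hext (γ t) u t huS h fun v hv1 hv2 => hball v ?_
      have h1 : dist v t ≤ dist t u := by
        rw [Subtype.dist_eq, Subtype.dist_eq, Real.dist_eq, Real.dist_eq,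
          abs_of_nonpos (sub_nonpos.mpr (Subtype.coe_le_coe.mpr hv2)),
          abs_of_nonneg (sub_nonneg.mpr (Subtype.coe_le_coe.mpr h))]
        have := Subtype.coe_le_coe.mpr hv1
        linarith
      exact lt_of_le_of_lt h1 hut
  have hS : S = univ := IsClopen.eq_univ ⟨hclosed, hopen⟩ ⟨0, h0S⟩
  have h1S : (1 : I) ∈ S := by rw [hS]; exact mem_univ _
  obtain ⟨Γ, hc, h0, hl⟩ := h1S
  exact ⟨Γ, hc, h0, fun t => hl t le_one'⟩

theorem lift_unique (hp : IsCoveringMap p) {γ : I → X} {Γ₁ Γ₂ : I → E}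
    (h₁ : Continuous Γ₁) (h₂ : Continuous Γ₂) (hl₁ : ∀ t, p (Γ₁ t) = γ t)
    (hl₂ : ∀ t, p (Γ₂ t) = γ t) (h0 : Γ₁ 0 = Γ₂ 0) : Γ₁ = Γ₂ :=
  hp.eq_of_comp_eq h₁ h₂ (funext fun t => (hl₁ t).trans (hl₂ t).symm) 0 h0

end CoveringLiftAux
namespace CoveringLiftAux

variable {E X : Type*} [TopologicalSpace E] [TopologicalSpace X] {p : E → X}
variable [∀ x : X, Nonempty ↥(p ⁻¹' {x})]

/-- Linear interpolation inside the unit interval. -/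
def seg (a b : I) : I → I := fun v =>
  ⟨(1 - (v : ℝ)) * a + v * b, by
    constructor
    · have h1 : (0:ℝ) ≤ 1 - v := by linarith [v.2.2]
      exact add_nonneg (mul_nonneg h1 a.2.1) (mul_nonneg v.2.1 b.2.1)
    · have h1 : (0:ℝ) ≤ 1 - v := by linarith [v.2.2]
      nlinarith [a.2.2, b.2.2, v.2.1, v.2.2]⟩

theorem seg_zero (a b : I) : seg a b 0 = a := by
  apply Subtype.ext; simp [seg]

theorem seg_one (a b : I) : seg a b 1 = b := by
  apply Subtype.ext; simp [seg]

theorem seg_cont (a b : I) : Continuous (seg a b) := by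
  apply Continuous.subtype_mk
  fun_prop

theorem seg_dist (a b : I) (v : I) : dist (seg a b v) a ≤ dist b a := by
  rw [Subtype.dist_eq, Subtype.dist_eq, Real.dist_eq, Real.dist_eq]
  have h1 : ((seg a b v : I) : ℝ) - a = v * (b - a) := by
    show (1 - (v : ℝ)) * a + v * b - a = _
    ring
  rw [h1, abs_mul, abs_of_nonneg v.2.1]
  nlinarith [abs_nonneg ((b:ℝ) - a), v.2.2, v.2.1]

/-- The monodromy theorem: lifts of homotopic paths starting at the same point
have the same end point. -/
theorem homotopic_lifts_end_eq (hp : IsCoveringMap p) {a b : X} {γ₀ γ₁ : Path a b}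
    (h : γ₀.Homotopic γ₁) {e₀ : E} {Γ₀ Γ₁ : I → E}
    (hc₀ : Continuous Γ₀) (hc₁ : Continuous Γ₁) (h00 : Γ₀ 0 = e₀) (h10 : Γ₁ 0 = e₀)
    (hl₀ : ∀ t, p (Γ₀ t) = γ₀ t) (hl₁ : ∀ t, p (Γ₁ t) = γ₁ t) : Γ₀ 1 = Γ₁ 1 := by
  classical
  have H : Path.Homotopy γ₀ γ₁ := h.some
  have hHc : Continuous fun z : I × I => H z := H.continuous
  have hsrc : ∀ s : I, H (s, 0) = a := fun s => H.source s
  have htgt : ∀ s : I, H (s, 1) = b := fun s => H.target s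
  have hpe : p e₀ = a := by rw [← h00, hl₀ 0, γ₀.source]
  have hlifts : ∀ s : I, ∃ Γ : I → E, Continuous Γ ∧ Γ 0 = e₀ ∧ ∀ t, p (Γ t) = H (s, t) :=
    fun s => exists_path_lift hp _ (hHc.comp (Continuous.prodMk_right s)) e₀
      (hpe.trans (hsrc s).symm)
  choose Γs hΓc hΓ0 hΓl using hlifts
  set φ : I → E := fun s => Γs s 1 with hφ
  have key : ∀ s₀ : I, ∃ δ > 0, ∀ s : I, dist s s₀ < δ → φ s = φ s₀ := by
    intro s₀
    obtain ⟨δ, hδ0, hδ⟩ := lebesgue_number_lemma_of_metric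
      (s := ({s₀} ×ˢ (univ : Set I) : Set (I × I)))
      (c := fun x : X => (fun z : I × I => H z) ⁻¹' (triv hp x).baseSet)
      (isCompact_singleton.prod isCompact_univ)
      (fun x => ((triv hp x).open_baseSet).preimage hHc)
      (fun z _ => mem_iUnion.mpr ⟨H z, mem_triv_baseSet hp (H z)⟩)
    obtain ⟨n, hn⟩ := exists_nat_one_div_lt hδ0
    set N : ℕ := n + 1 with hNdef
    have hN : (1 : ℝ) / N < δ := by
      rw [hNdef]; push_cast; exact hn
    have hNpos : (0:ℝ) < 1 / N := by positivity
    set τ : ℕ → I := fun i => projIcc 0 1 zero_le_one ((i : ℝ) / N) with hτdef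
    have hτcoe : ∀ i : ℕ, ((τ i : I) : ℝ) = min 1 ((i : ℝ) / N) := by
      intro i
      rw [hτdef]
      simp only [coe_projIcc]
      rw [max_eq_right]
      exact le_min zero_le_one (by positivity)
    have hτ0 : τ 0 = 0 := by
      apply Subtype.ext; rw [hτcoe 0]; simp
    have hτN : τ N = 1 := by
      apply Subtype.ext; rw [hτcoe N]
      rw [div_self (by positivity : (N:ℝ) ≠ 0)]; simp
    have hτgap : ∀ i : ℕ, dist (τ (i + 1)) (τ i) ≤ 1 / N := by
      intro i
      rw [Subtype.dist_eq, Real.dist_eq, hτcoe, hτcoe, Nat.cast_add, Nat.cast_one]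
      set x : ℝ := (i : ℝ) / N with hx
      have hxy : ((i : ℝ) + 1) / N = x + 1 / N := by rw [hx]; ring
      rw [hxy]
      rcases le_total 1 x with hc | hc
      · rw [min_eq_left hc, min_eq_left (by linarith : (1:ℝ) ≤ x + 1/N)]
        simp only [sub_self, abs_zero]
        exact hNpos.le
      · rw [min_eq_right hc]
        have h1 : x ≤ min 1 (x + 1/N) := le_min hc (by linarith)
        have h2 : min 1 (x + 1/N) ≤ x + 1/N := min_le_right _ _
        rw [abs_of_nonneg (by linarith)]
        linarith
    refine ⟨δ, hδ0, fun s hs => ?_⟩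
    have hx : ∀ i : ℕ, ∃ x : X,
        ball ((s₀, τ i) : I × I) δ ⊆ (fun z : I × I => H z) ⁻¹' (triv hp x).baseSet :=
      fun i => hδ (s₀, τ i) ⟨rfl, mem_univ _⟩
    choose xs hxs using hx
    have hmem : ∀ (i : ℕ) (v u : I), dist v s₀ < δ → dist u (τ i) ≤ 1 / N →
        H (v, u) ∈ (triv hp (xs i)).baseSet := by
      intro i v u h1 h2
      exact hxs i (mem_ball.mpr (by
        rw [Prod.dist_eq]
        exact max_lt h1 (lt_of_le_of_lt h2 hN)))
    have hds₀ : dist s₀ s₀ < δ := by rw [dist_self]; exact hδ0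
    have hdss : ∀ v : I, dist (seg s₀ s v) s₀ < δ :=
      fun v => lt_of_le_of_lt (seg_dist s₀ s v) hs
    have main : ∀ i : ℕ,
        ((triv hp (xs i)) (Γs s₀ (τ i))).2 = ((triv hp (xs i)) (Γs s (τ i))).2 := by
      intro i
      induction i with
      | zero => rw [hτ0, hΓ0 s₀, hΓ0 s]
      | succ i ih =>
        have hgap := hτgap i
        have stepA : ∀ w : I, dist w s₀ < δ →
            ((triv hp (xs i)) (Γs w (τ (i+1)))).2 = ((triv hp (xs i)) (Γs w (τ i))).2 := by
          intro w hw
          have hcont : Continuous fun v => Γs w (seg (τ i) (τ (i+1)) v) :=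
            (hΓc w).comp (seg_cont _ _)
          have hmem' : ∀ v : I, p (Γs w (seg (τ i) (τ (i+1)) v)) ∈ (triv hp (xs i)).baseSet := by
            intro v
            rw [hΓl w]
            exact hmem i w _ hw ((seg_dist _ _ v).trans hgap)
          have hsc := snd_const hp (xs i) hcont hmem' 1 0
          rwa [seg_one, seg_zero] at hsc
        have D : ((triv hp (xs i)) (Γs s₀ (τ (i+1)))).2
            = ((triv hp (xs i)) (Γs s (τ (i+1)))).2 := by
          rw [stepA s₀ hds₀, ih, ← stepA s hs]
        set T := triv hp (xs i) with hT
        set c := (T (Γs s₀ (τ (i+1)))).2 with hcdef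
        have hbase : ∀ v : I, H (seg s₀ s v, τ (i+1)) ∈ T.baseSet :=
          fun v => hmem i _ _ (hdss v) hgap
        set g2 : I → E := fun v => T.toOpenPartialHomeomorph.symm (H (seg s₀ s v, τ (i+1)), c)
          with hg2
        have hg2c : Continuous g2 := by
          apply T.toOpenPartialHomeomorph.symm.continuousOn.comp_continuous
            ((hHc.comp ((seg_cont s₀ s).prodMk continuous_const)).prodMk continuous_const)
          intro v
          rw [OpenPartialHomeomorph.symm_source]
          exact (T.mem_target (x := (H (seg s₀ s v, τ (i+1)), c))).mpr (hbase v)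
        have hg2p : ∀ v : I, p (g2 v) = H (seg s₀ s v, τ (i+1)) :=
          fun v => T.proj_symm_apply
            ((T.mem_target (x := (H (seg s₀ s v, τ (i+1)), c))).mpr (hbase v))
        have hΓbs : ∀ w : I, dist w s₀ < δ → p (Γs w (τ (i+1))) ∈ T.baseSet := by
          intro w hw; rw [hΓl w]; exact hmem i w _ hw hgap
        have hg20 : g2 0 = Γs s₀ (τ (i+1)) := by
          show T.toOpenPartialHomeomorph.symm (H (seg s₀ s 0, τ (i+1)), c) = _
          rw [seg_zero, ← hΓl s₀ (τ (i+1))]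
          exact symm_mk hp (xs i) (hΓbs s₀ hds₀)
        have hg21 : g2 1 = Γs s (τ (i+1)) := by
          show T.toOpenPartialHomeomorph.symm (H (seg s₀ s 1, τ (i+1)), c) = _
          rw [seg_one, ← hΓl s (τ (i+1)), D]
          exact symm_mk hp (xs i) (hΓbs s hs)
        have hmem2 : ∀ v : I, p (g2 v) ∈ (triv hp (xs (i+1))).baseSet := by
          intro v
          rw [hg2p v]
          exact hmem (i+1) _ _ (hdss v) (by rw [dist_self]; exact hNpos.le)
        have hsc := snd_const hp (xs (i+1)) hg2c hmem2 0 1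
        rwa [hg20, hg21] at hsc
    have hfin := main N
    rw [hτN] at hfin
    refine (eq_of_snd_eq hp (xs N) ?_ ?_ ?_ hfin).symm
    · rw [hΓl s₀ 1]
      exact hmem N s₀ 1 hds₀ (by rw [hτN, dist_self]; exact hNpos.le)
    · rw [hΓl s 1]
      exact hmem N s 1 hs (by rw [hτN, dist_self]; exact hNpos.le)
    · rw [hΓl s₀ 1, hΓl s 1, htgt s₀, htgt s]
  have hconst : ∀ s : I, φ s = φ 0 := by
    have hclopen : IsClopen {s : I | φ s = φ 0} := by
      constructor
      · rw [← isOpen_compl_iff, Metric.isOpen_iff]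
        intro s hs
        simp only [mem_compl_iff, mem_setOf_eq] at hs
        obtain ⟨δ, hδ0, hδ⟩ := key s
        refine ⟨δ, hδ0, fun u hu => ?_⟩
        simp only [mem_compl_iff, mem_setOf_eq]
        intro huq
        exact hs ((hδ u (mem_ball.mp hu)).symm.trans huq)
      · rw [Metric.isOpen_iff]
        intro s hs
        simp only [mem_setOf_eq] at hs
        obtain ⟨δ, hδ0, hδ⟩ := key s
        refine ⟨δ, hδ0, fun u hu => ?_⟩
        simp only [mem_setOf_eq]
        rw [hδ u (mem_ball.mp hu)]
        exact hs
    have huniv := IsClopen.eq_univ hclopen ⟨0, rfl⟩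
    intro s
    have : s ∈ {s : I | φ s = φ 0} := huniv ▸ mem_univ s
    exact this
  have hΓ₀ : Γ₀ = Γs 0 :=
    lift_unique hp hc₀ (hΓc 0) hl₀
      (fun t => (hΓl 0 t).trans (H.apply_zero t)) (by rw [h00, hΓ0 0])
  have hΓ₁ : Γ₁ = Γs 1 :=
    lift_unique hp hc₁ (hΓc 1) hl₁
      (fun t => (hΓl 1 t).trans (H.apply_one t)) (by rw [h10, hΓ0 1])
  rw [hΓ₀, hΓ₁]
  exact (hconst 1).symm

end CoveringLiftAux
namespace CoveringLiftAux

variable {E X : Type*} [TopologicalSpace E] [TopologicalSpace X] {p : E → X}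
variable [∀ x : X, Nonempty ↥(p ⁻¹' {x})]

/-- The endpoint of the lift of a path starting at `e₀`. -/
noncomputable def liftEnd (hp : IsCoveringMap p) {a b : X} (γ : Path a b) {e₀ : E}
    (he : p e₀ = a) : E :=
  Classical.choose (exists_path_lift hp γ γ.continuous e₀ (by rw [γ.source]; exact he)) 1

theorem liftEnd_spec (hp : IsCoveringMap p) {a b : X} (γ : Path a b) {e₀ : E}
    (he : p e₀ = a) :
    ∃ Γ : I → E, Continuous Γ ∧ Γ 0 = e₀ ∧ (∀ t, p (Γ t) = γ t) ∧ Γ 1 = liftEnd hp γ he := by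
  obtain ⟨hc, h0, hl⟩ :=
    Classical.choose_spec (exists_path_lift hp γ γ.continuous e₀ (by rw [γ.source]; exact he))
  exact ⟨_, hc, h0, hl, rfl⟩

theorem liftEnd_unique (hp : IsCoveringMap p) {a b : X} {γ : Path a b} {e₀ : E}
    (he : p e₀ = a) {Γ : I → E} (hc : Continuous Γ) (h0 : Γ 0 = e₀)
    (hl : ∀ t, p (Γ t) = γ t) : Γ 1 = liftEnd hp γ he := by
  obtain ⟨Γ', hc', h0', hl', he'⟩ := liftEnd_spec hp γ he
  rw [← he']
  exact congrFun (lift_unique hp hc hc' hl hl' (h0.trans h0'.symm)) 1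

theorem p_liftEnd (hp : IsCoveringMap p) {a b : X} (γ : Path a b) {e₀ : E}
    (he : p e₀ = a) : p (liftEnd hp γ he) = b := by
  obtain ⟨Γ, hc, h0, hl, he'⟩ := liftEnd_spec hp γ he
  rw [← he', hl 1, γ.target]

theorem liftEnd_congr (hp : IsCoveringMap p) {a b : X} {γ γ' : Path a b}
    (h : γ.Homotopic γ') {e₀ : E} (he : p e₀ = a) :
    liftEnd hp γ he = liftEnd hp γ' he := by
  obtain ⟨Γ, hc, h0, hl, he'⟩ := liftEnd_spec hp γ he
  obtain ⟨Γ', hc', h0', hl', he''⟩ := liftEnd_spec hp γ' he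
  rw [← he', ← he'']
  exact homotopic_lifts_end_eq hp h hc hc' h0 h0' hl hl'

/-- The lifting criterion, existence part. -/
theorem exists_lift {Y : Type*} [TopologicalSpace Y] [PathConnectedSpace Y]
    [LocallyPathConnectedSpace Y] (hp : IsCoveringMap p) {f : Y → X} (hf : Continuous f)
    (y₀ : Y) (e₀ : E) (he : p e₀ = f y₀)
    (hmono : ∀ γ : Path y₀ y₀, liftEnd hp (γ.map hf) he = e₀) :
    ∃ F : Y → E, Continuous F ∧ (∀ y, p (F y) = f y) ∧ F y₀ = e₀ := by
  classical
  set F : Y → E := fun y => liftEnd hp ((PathConnectedSpace.somePath y₀ y).map hf) he with hF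
  have hpF : ∀ y, p (F y) = f y := fun y => p_liftEnd hp _ he
  have indep : ∀ (y : Y) (ρ₀ : Path y₀ y), liftEnd hp (ρ₀.map hf) he = F y := by
    intro y ρ₀
    set sp := PathConnectedSpace.somePath y₀ y with hsp
    obtain ⟨Γ₁, hc₁, h01, hl₁, he₁⟩ := liftEnd_spec hp (ρ₀.map hf) he
    set A := liftEnd hp (ρ₀.map hf) he with hA
    have pA : p A = f y := p_liftEnd hp _ he
    obtain ⟨Γ₃, hc₃, h03, hl₃, he₃⟩ := liftEnd_spec hp ((sp.map hf).symm) pA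
    set B := liftEnd hp ((sp.map hf).symm) pA with hB
    have hmB : B = e₀ := by
      have hm := hmono (ρ₀.trans sp.symm)
      rw [Path.map_trans, ← Path.map_symm] at hm
      rw [← hm]
      set P₁ : Path e₀ A := ⟨⟨Γ₁, hc₁⟩, h01, he₁⟩ with hP₁
      set P₃ : Path A B := ⟨⟨Γ₃, hc₃⟩, h03, he₃⟩ with hP₃
      have hQl : ∀ t, p ((P₁.trans P₃) t) = ((ρ₀.map hf).trans (sp.map hf).symm) t := by
        intro t
        rw [Path.trans_apply, Path.trans_apply]
        split_ifs with ht
        · exact hl₁ _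
        · exact hl₃ _
      have hQ := liftEnd_unique hp he (P₁.trans P₃).continuous (P₁.trans P₃).source hQl
      rw [← hQ]
      exact ((P₁.trans P₃).target).symm
    have hrev : A = liftEnd hp (sp.map hf) he := by
      set P₃ : Path A B := ⟨⟨Γ₃, hc₃⟩, h03, he₃⟩ with hP₃
      have hsl : ∀ t, p (P₃.symm t) = (sp.map hf) t := by
        intro t
        rw [Path.symm_apply]
        simp only [Function.comp_apply]
        rw [show (⇑P₃) (unitInterval.symm t) = Γ₃ (unitInterval.symm t) from rfl,
          hl₃ (unitInterval.symm t), Path.symm_apply]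
        show (sp.map hf) (unitInterval.symm (unitInterval.symm t)) = (sp.map hf) t
        rw [unitInterval.symm_symm]
      have h0s : P₃.symm 0 = e₀ := P₃.symm.source.trans hmB
      have hend := liftEnd_unique hp he P₃.symm.continuous h0s hsl
      rw [← hend]
      exact (P₃.symm.target).symm
    rw [hrev, hsp]
  have hF0 : F y₀ = e₀ := by
    rw [← indep y₀ (Path.refl y₀)]
    refine (liftEnd_unique hp he continuous_const rfl fun t => ?_).symm
    simp only [Path.map_coe, Function.comp_apply, Path.refl_apply]
    exact he
  have hcont : Continuous F := by
    rw [continuous_iff_continuousAt]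
    intro y₁
    have hU : f ⁻¹' (triv hp (f y₁)).baseSet ∈ 𝓝 y₁ :=
      hf.continuousAt.preimage_mem_nhds
        ((triv hp (f y₁)).open_baseSet.mem_nhds (mem_triv_baseSet hp (f y₁)))
    obtain ⟨N, ⟨hN𝓝, hNpc⟩, hNsub⟩ := (path_connected_basis y₁).mem_iff.mp hU
    have hy₁N : y₁ ∈ N := mem_of_mem_nhds hN𝓝
    have pf1 : p (F y₁) = f y₁ := hpF y₁
    have hloc : ∀ y ∈ N, F y =
        (triv hp (f y₁)).toOpenPartialHomeomorph.symm (f y, ((triv hp (f y₁)) (F y₁)).2) := by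
      intro y hy
      have hJ : JoinedIn N y₁ y := hNpc.joinedIn y₁ hy₁N y hy
      obtain ⟨Γ₁, hc₁, h01, hl₁, he₁⟩ :=
        liftEnd_spec hp ((PathConnectedSpace.somePath y₀ y₁).map hf) he
      obtain ⟨Γ₂, hc₂, h02, hl₂, he₂⟩ := liftEnd_spec hp (hJ.somePath.map hf) pf1
      have hFy : F y = liftEnd hp (hJ.somePath.map hf) pf1 := by
        rw [← indep y ((PathConnectedSpace.somePath y₀ y₁).trans hJ.somePath), Path.map_trans]
        set P₁ : Path e₀ (F y₁) := ⟨⟨Γ₁, hc₁⟩, h01, he₁⟩ with hP₁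
        set P₂ : Path (F y₁) (liftEnd hp (hJ.somePath.map hf) pf1) := ⟨⟨Γ₂, hc₂⟩, h02, he₂⟩
          with hP₂
        have hQl : ∀ t, p ((P₁.trans P₂) t) =
            (((PathConnectedSpace.somePath y₀ y₁).map hf).trans (hJ.somePath.map hf)) t := by
          intro t
          rw [Path.trans_apply, Path.trans_apply]
          split_ifs with ht
          · exact hl₁ _
          · exact hl₂ _
        rw [← liftEnd_unique hp he (P₁.trans P₂).continuous (P₁.trans P₂).source hQl]
        exact (P₁.trans P₂).target
      have hsheet : ∀ t, p (Γ₂ t) ∈ (triv hp (f y₁)).baseSet := by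
        intro t
        rw [hl₂ t]
        exact hNsub (hJ.somePath_mem t)
      have hsnd : ((triv hp (f y₁)) (Γ₂ 1)).2 = ((triv hp (f y₁)) (Γ₂ 0)).2 :=
        snd_const hp (f y₁) hc₂ hsheet 1 0
      have hpB : p (Γ₂ 1) = f y := (hl₂ 1).trans (hJ.somePath.map hf).target
      have hkey := symm_mk hp (f y₁) (hsheet 1)
      rw [hpB, hsnd, h02] at hkey
      rw [hFy, ← he₂]
      exact hkey.symm
    have hCA : ContinuousAt (fun y =>
        (triv hp (f y₁)).toOpenPartialHomeomorph.symm (f y, ((triv hp (f y₁)) (F y₁)).2)) y₁ := by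
      apply ContinuousAt.comp
      · apply (triv hp (f y₁)).toOpenPartialHomeomorph.symm.continuousAt
        rw [OpenPartialHomeomorph.symm_source]
        exact ((triv hp (f y₁)).mem_target
          (x := (f y₁, ((triv hp (f y₁)) (F y₁)).2))).mpr (mem_triv_baseSet hp (f y₁))
      · exact hf.continuousAt.prodMk continuousAt_const
    exact ((hCA.congr (Filter.eventuallyEq_of_mem hN𝓝 fun y hy => (hloc y hy).symm)).congr
      (Filter.eventuallyEq_of_mem hN𝓝 fun y hy => hloc y hy)).congr
      (Filter.eventuallyEq_of_mem hN𝓝 fun y hy => (hloc y hy).symm)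
  exact ⟨F, hcont, hpF, hF0⟩

end CoveringLiftAux
namespace CoveringLiftAux

theorem locPathConnected_prod {A B : Type*} [TopologicalSpace A] [TopologicalSpace B]
    [LocallyPathConnectedSpace A] [LocallyPathConnectedSpace B] :
    LocallyPathConnectedSpace (A × B) := by
  constructor
  rintro ⟨a, b⟩
  rw [Filter.hasBasis_self]
  intro t ht
  rw [mem_nhds_prod_iff] at ht
  obtain ⟨u, hu, v, hv, huv⟩ := ht
  obtain ⟨u', ⟨hu'n, hu'pc⟩, hu's⟩ := (path_connected_basis a).mem_iff.mp hu
  obtain ⟨v', ⟨hv'n, hv'pc⟩, hv's⟩ := (path_connected_basis b).mem_iff.mp hv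
  refine ⟨u' ×ˢ v', prod_mem_nhds hu'n hv'n, ?_, (prod_mono hu's hv's).trans huv⟩
  obtain ⟨x, hx, hjx⟩ := hu'pc
  obtain ⟨y, hy, hjy⟩ := hv'pc
  refine ⟨(x, y), ⟨hx, hy⟩, ?_⟩
  rintro ⟨z1, z2⟩ ⟨hz1, hz2⟩
  have j1 : JoinedIn u' x z1 := hjx hz1
  have j2 : JoinedIn v' y z2 := hjy hz2
  exact ⟨j1.somePath.prod j2.somePath, fun t => ⟨j1.somePath_mem t, j2.somePath_mem t⟩⟩

end CoveringLiftAux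

open CoveringLiftAux in
/-- **Lifting a group action along a covering map** (topological version of
Proposition 2.1). Let `p : M' → M` be a covering map (a continuous surjection,
evenly covered everywhere) with `M'` nonempty, connected and locally
path-connected, and let `G` be a path-connected, locally path-connected
topological group. Let `θ : M × G → M` be a continuous right action of `G` on
`M`. Assume that for every `x : M` the orbit map `g ↦ θ (x, g)` induces the
trivial homomorphism `π₁(G, 1) → π₁(M, x)`, i.e. every loop at `1` in `G` maps
to a null-homotopic loop in `M`. Then there is a unique continuous map
`θ' : M' × G → M'` lifting `θ` (that is, `p (θ' (z, g)) = θ (p z, g)`) which is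
a right action of `G` on `M'`. -/
theorem lift_action_of_covering
    {M' M G : Type*} [TopologicalSpace M'] [TopologicalSpace M]
    [TopologicalSpace G] [Group G] [IsTopologicalGroup G]
    [PathConnectedSpace G] [LocallyPathConnectedSpace G]
    [Nonempty M'] [ConnectedSpace M'] [LocallyPathConnectedSpace M']
    (p : M' → M) (hp : IsCoveringMap p) (hpsurj : Function.Surjective p)
    (θ : M × G → M) (hθcont : Continuous θ)
    (hθone : ∀ x : M, θ (x, 1) = x)
    (hθmul : ∀ (x : M) (g h : G), θ (θ (x, g), h) = θ (x, g * h))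
    (htriv : ∀ (x : M) (γ : Path (1 : G) 1),
      (γ.map (hθcont.comp (Continuous.prodMk_right x))).Homotopic
        (Path.refl (θ (x, 1)))) :
    ∃! θ' : M' × G → M',
      Continuous θ' ∧
      (∀ (z : M') (g : G), p (θ' (z, g)) = θ (p z, g)) ∧
      (∀ z : M', θ' (z, 1) = z) ∧
      (∀ (z : M') (g h : G), θ' (θ' (z, g), h) = θ' (z, g * h)) := by
  classical
  haveI : ∀ x : M, Nonempty ↥(p ⁻¹' {x}) := fun x => ⟨⟨(hpsurj x).choose, (hpsurj x).choose_spec⟩⟩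
  haveI : LocallyPathConnectedSpace (M' × G) := locPathConnected_prod
  haveI : ConnectedSpace G := PathConnectedSpace.connectedSpace
  haveI : PathConnectedSpace (M' × G) := pathConnectedSpace_iff_connectedSpace.mpr inferInstance
  set f : M' × G → M := fun y => θ (p y.1, y.2) with hfdef
  have hfc : Continuous f :=
    hθcont.comp ((hp.continuous.comp continuous_fst).prodMk continuous_snd)
  set z₀ : M' := Classical.arbitrary M' with hz₀
  have he : p z₀ = f (z₀, 1) := (hθone (p z₀)).symm
  -- the monodromy hypothesis
  have hmono : ∀ γ : Path ((z₀, 1) : M' × G) (z₀, 1), liftEnd hp (γ.map hfc) he = z₀ := by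
    intro γ
    set α : Path z₀ z₀ := γ.map continuous_fst with hα
    set β : Path (1 : G) 1 := γ.map continuous_snd with hβ
    have hγeq : γ = α.prod β := by
      apply Path.ext
      funext t
      exact (Prod.mk.eta).symm
    -- the homotopies
    have h1 : (α.trans (Path.refl z₀)).Homotopic α := ⟨Path.Homotopy.transRefl α⟩
    have h2 : ((Path.refl (1 : G)).trans β).Homotopic β := ⟨Path.Homotopy.reflTrans β⟩
    have hprod : ((α.trans (Path.refl z₀)).prod ((Path.refl (1 : G)).trans β)).Homotopic
        (α.prod β) := ⟨Path.Homotopic.prodHomotopy h1.some h2.some⟩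
    have heq2 : (α.prod (Path.refl (1 : G))).trans ((Path.refl z₀).prod β)
        = (α.trans (Path.refl z₀)).prod ((Path.refl (1 : G)).trans β) :=
      Path.trans_prod_eq_prod_trans _ _ _ _
    have hstep1 : (γ.map hfc).Homotopic
        (((α.prod (Path.refl (1 : G))).map hfc).trans (((Path.refl z₀).prod β).map hfc)) := by
      rw [← Path.map_trans, heq2, hγeq]
      exact Path.Homotopic.map hprod.symm ⟨f, hfc⟩
    -- the second factor is null-homotopic
    have horb : (((Path.refl z₀).prod β).map hfc).Homotopic (Path.refl (f (z₀, 1))) := by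
      have hBeq : ((Path.refl z₀).prod β).map hfc
          = β.map (hθcont.comp (Continuous.prodMk_right (p z₀))) := by
        apply Path.ext
        funext t
        rfl
      rw [hBeq]
      exact htriv (p z₀) β
    have hstep2 : (γ.map hfc).Homotopic ((α.prod (Path.refl (1 : G))).map hfc) := by
      refine hstep1.trans ?_
      refine (Path.Homotopic.hcomp (Path.Homotopic.refl _) horb).trans ?_
      exact ⟨Path.Homotopy.transRefl _⟩
    rw [liftEnd_congr hp hstep2 he]
    have hl : ∀ t, p (α t) = ((α.prod (Path.refl (1 : G))).map hfc) t :=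
      fun t => (hθone (p (α t))).symm
    have := liftEnd_unique hp he α.continuous α.source hl
    rw [← this]
    exact α.target
  obtain ⟨F, hFc, hFl, hF0⟩ := exists_lift hp hfc (z₀, 1) z₀ he hmono
  -- F (·, 1) = id
  have hunit : ∀ z : M', F (z, 1) = z := by
    have heq := hp.eq_of_comp_eq (g₁ := fun z : M' => F (z, 1)) (g₂ := id)
      (hFc.comp (continuous_id.prodMk continuous_const)) continuous_id
      (funext fun z => by
        show p (F (z, 1)) = p z
        rw [hFl (z, 1)]
        exact hθone (p z))
      z₀ hF0
    exact fun z => congrFun heq z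
  -- action property
  have hact : ∀ (z : M') (g h : G), F (F (z, g), h) = F (z, g * h) := by
    have heq := hp.eq_of_comp_eq (A := (M' × G) × G)
      (g₁ := fun w : (M' × G) × G => F (F w.1, w.2))
      (g₂ := fun w : (M' × G) × G => F (w.1.1, w.1.2 * w.2))
      (hFc.comp ((hFc.comp continuous_fst).prodMk continuous_snd))
      (hFc.comp ((continuous_fst.comp continuous_fst).prodMk
        ((continuous_snd.comp continuous_fst).mul continuous_snd)))
      (funext fun w => by
        show p (F (F w.1, w.2)) = p (F (w.1.1, w.1.2 * w.2))
        rw [hFl (F w.1, w.2)]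
        show θ (p (F w.1), w.2) = p (F (w.1.1, w.1.2 * w.2))
        rw [hFl w.1, hFl (w.1.1, w.1.2 * w.2)]
        show θ (θ (p w.1.1, w.1.2), w.2) = θ (p w.1.1, w.1.2 * w.2)
        exact hθmul _ _ _)
      ((z₀, 1), 1)
      (by
        show F (F (z₀, 1), 1) = F (z₀, 1 * 1)
        rw [hF0, one_mul])
    exact fun z g h => congrFun heq ((z, g), h)
  refine ⟨F, ⟨hFc, fun z g => hFl (z, g), hunit, hact⟩, ?_⟩
  rintro F' ⟨hF'c, hF'l, hF'unit, -⟩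
  exact hp.eq_of_comp_eq hF'c hFc
    (funext fun y => by
      show p (F' y) = p (F y)
      rw [hFl y]
      exact hF'l y.1 y.2)
    (z₀, 1) (by rw [hF'unit z₀, hF0])
end

section
/- Let p : M' → M be a covering map of topological spaces with M' connected, and let G be a connected topological group. Let θ : M × G → M be a continuous right action of G on M, and let θ' : M' × G → M' be a continuous right action of G on M' lifting θ, i.e. p(θ'(z,g)) = θ(p(z),g) for all z ∈ M', g ∈ G. Then every deck transformation of p commutes with the action θ': for every homeomorphism γ : M' → M' with p ∘ γ = p, one has γ(θ'(z,g)) = θ'(γ(z),g) for all z ∈ M' and g ∈ G. -/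
/-- **Deck transformations commute with a lifted action of a connected group**
(topological version of Lemma 2.2). Let `p : M' → M` be a covering map with
`M'` connected, `G` a connected topological group, `θ` a continuous right
action of `G` on `M`, and `θ'` a continuous right action of `G` on `M'`
lifting `θ` (i.e. `p (θ' (z, g)) = θ (p z, g)`). Then every deck
transformation `γ` of `p` (a homeomorphism of `M'` with `p ∘ γ = p`) commutes
with `θ'`: `γ (θ' (z, g)) = θ' (γ z, g)` for all `z` and `g`. -/
theorem deck_commutes_with_lifted_action
    {M' M G : Type*} [TopologicalSpace M'] [TopologicalSpace M]
    [TopologicalSpace G] [Group G] [IsTopologicalGroup G]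
    [ConnectedSpace M'] [ConnectedSpace G]
    (p : M' → M) (hp : IsCoveringMap p) (hpsurj : Function.Surjective p)
    (θ : M × G → M) (hθcont : Continuous θ)
    (hθone : ∀ x : M, θ (x, 1) = x)
    (hθmul : ∀ (x : M) (g h : G), θ (θ (x, g), h) = θ (x, g * h))
    (θ' : M' × G → M') (hθ'cont : Continuous θ')
    (hθ'one : ∀ z : M', θ' (z, 1) = z)
    (hθ'mul : ∀ (z : M') (g h : G), θ' (θ' (z, g), h) = θ' (z, g * h))
    (hlift : ∀ (z : M') (g : G), p (θ' (z, g)) = θ (p z, g))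
    (γ : M' ≃ₜ M') (hγ : ∀ z : M', p (γ z) = p z) :
    ∀ (z : M') (g : G), γ (θ' (z, g)) = θ' (γ z, g) := by
  intro z g
  have key : (fun g : G => γ (θ' (z, g))) = fun g : G => θ' (γ z, g) := by
    refine hp.eq_of_comp_eq (γ.continuous.comp (hθ'cont.comp (Continuous.prodMk_right z)))
      (hθ'cont.comp (Continuous.prodMk_right (γ z))) ?_ 1 (by simp [hθ'one])
    funext h
    simp only [Function.comp_apply]
    rw [hγ, hlift, hlift, hγ]
  exact congrFun key g
end

section
/- Let f : Y → X be a continuous map of topological spaces with Y path-connected, and let p : E → X be a covering map with E path-connected. Fix y₀ ∈ Y and e₀ ∈ E with p(e₀) = f(y₀). If the induced homomorphism f₊ : π₁(Y,y₀) → π₁(X,f(y₀)) is surjective, then the pullback Y ×_X E = {(y,e) ∈ Y × E : f(y) = p(e)} (with the subspace topology of the product) is path-connected. -/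
open unitInterval Set Filter Topology

section CoveringLifting

variable {E X : Type*} [TopologicalSpace E] [TopologicalSpace X] {p : E → X}

/-- In the unit interval, every neighborhood contains a closed interval
neighborhood. -/
private lemma exists_icc_nhds (x : I) {s : Set I} (hs : s ∈ 𝓝 x) :
    ∃ a b : I, Set.Icc a b ∈ 𝓝 x ∧ Set.Icc a b ⊆ s := by
  rw [nhds_subtype] at hs
  obtain ⟨u, hu, hsub⟩ := hs
  obtain ⟨ε, hε, hball⟩ := Metric.mem_nhds_iff.mp hu
  have hx0 : (0:ℝ) ≤ x := x.2.1
  have hx1 : (x:ℝ) ≤ 1 := x.2.2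
  refine ⟨⟨max 0 ((x:ℝ) - ε/2), le_max_left _ _, max_le zero_le_one (by linarith)⟩,
    ⟨min 1 ((x:ℝ) + ε/2), le_min zero_le_one (by linarith), min_le_left _ _⟩, ?_, ?_⟩
  · have hIoo : Set.Ioo ((x:ℝ) - ε/2) ((x:ℝ) + ε/2) ∈ 𝓝 (x:ℝ) :=
      Ioo_mem_nhds (by linarith) (by linarith)
    rw [nhds_subtype]
    refine Filter.mem_of_superset (Filter.preimage_mem_comap hIoo) ?_
    rintro t ht
    simp only [Set.mem_preimage, Set.mem_Ioo] at ht
    exact ⟨Subtype.mk_le_mk.mpr (max_le t.2.1 ht.1.le),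
      Subtype.mk_le_mk.mpr (le_min t.2.2 ht.2.le)⟩
  · rintro t ⟨h1, h2⟩
    apply hsub
    show (t : ℝ) ∈ u
    apply hball
    have h1' : (x:ℝ) - ε/2 ≤ t := le_trans (le_max_right _ _) (Subtype.coe_le_coe.mpr h1)
    have h2' : (t:ℝ) ≤ (x:ℝ) + ε/2 := le_trans (Subtype.coe_le_coe.mpr h2) (min_le_right _ _)
    rw [Metric.mem_ball, Real.dist_eq, abs_lt]
    constructor <;> linarith

private lemma icc_preconn (a b : I) : IsPreconnected (Set.Icc a b) := by
  rw [← Topology.IsInducing.subtypeVal.isPreconnected_image]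
  rw [Set.image_subtype_val_Icc]
  exact isPreconnected_Icc

/-- Key technical lemma: local lifting of a map `I × I → X` (second coordinate
is the path parameter) against a covering map, given that the bottom edge is
constant over the base point `p e`. -/
private lemma boxLift (hp : IsCoveringMap p) {F : I × I → X} (hF : Continuous F)
    {e : E} (hF0 : ∀ s, F (s, 0) = p e) (s₀ : I) :
    ∃ a b : I, Set.Icc a b ∈ 𝓝 s₀ ∧ ∃ H : I × I → E, Continuous H ∧
      (∀ s ∈ Set.Icc a b, H (s, 0) = e) ∧
      ∀ s ∈ Set.Icc a b, ∀ t, p (H (s, t)) = F (s, t) := by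
  classical
  set S : Set I := {t | ∃ a b : I, Set.Icc a b ∈ 𝓝 s₀ ∧ ∃ H : I × I → E, Continuous H ∧
      (∀ s ∈ Set.Icc a b, H (s, 0) = e) ∧
      ∀ s ∈ Set.Icc a b, ∀ t' ≤ t, p (H (s, t')) = F (s, t')} with hS
  have hdown : ∀ {t t' : I}, t' ≤ t → t ∈ S → t' ∈ S := by
    rintro t t' hle ⟨a, b, hab, H, hHc, hH0, hHp⟩
    exact ⟨a, b, hab, H, hHc, hH0, fun s hs u hu => hHp s hs u (hu.trans hle)⟩
  have hIcc01 : Set.Icc (0:I) 1 = Set.univ := by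
    ext t
    simp only [Set.mem_Icc, Set.mem_univ, iff_true]
    exact ⟨t.2.1, t.2.2⟩
  have h0 : (0:I) ∈ S := by
    refine ⟨0, 1, by rw [hIcc01]; exact Filter.univ_mem, fun _ => e, continuous_const,
      fun _ _ => rfl, fun s _ t' ht' => ?_⟩
    have : t' = 0 := le_antisymm ht' t'.2.1
    rw [this, hF0]
  -- the key extension step
  have key : ∀ t₀ : I, ∃ t₁' t₂' : I, Set.Icc t₁' t₂' ∈ 𝓝 t₀ ∧
      ∀ t₁ ∈ S, t₁' ≤ t₁ → t₁ ≤ t₂' → t₂' ∈ S := by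
    intro t₀
    have hev := hp (F (s₀, t₀))
    rcases isEmpty_or_nonempty (p ⁻¹' {F (s₀, t₀)}) with hemp | hne
    · obtain ⟨_, U, hxU, hU, hfU, Hh, hHh⟩ := hev
      have hpU : p ⁻¹' U = ∅ :=
        Set.eq_empty_iff_forall_notMem.mpr fun e he => isEmptyElim (Hh ⟨e, he⟩).2
      have hV : F ⁻¹' U ∈ 𝓝 (s₀, t₀) := (hU.preimage hF).mem_nhds hxU
      rw [nhds_prod_eq] at hV
      obtain ⟨A, hA, B, hB, hAB⟩ := Filter.mem_prod_iff.mp hV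
      obtain ⟨t₁', t₂', hBn, hBs⟩ := exists_icc_nhds t₀ hB
      refine ⟨t₁', t₂', hBn, ?_⟩
      rintro t₁ ⟨a₁, b₁, hab₁, H, hHc, hH0, hHp⟩ hle₁ hle₂
      exfalso
      have hs : s₀ ∈ Set.Icc a₁ b₁ := mem_of_mem_nhds hab₁
      have hmemU : H (s₀, t₁) ∈ p ⁻¹' U := by
        show p _ ∈ U
        rw [hHp s₀ hs t₁ le_rfl]
        exact hAB (Set.mk_mem_prod (mem_of_mem_nhds hA) (hBs ⟨hle₁, hle₂⟩))
      rw [hpU] at hmemU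
      exact hmemU
    set T := hev.toTrivialization with hT
    have hbase : F (s₀, t₀) ∈ T.baseSet := hev.mem_toTrivialization_baseSet
    have hV : F ⁻¹' T.baseSet ∈ 𝓝 (s₀, t₀) := (T.open_baseSet.preimage hF).mem_nhds hbase
    rw [nhds_prod_eq] at hV
    obtain ⟨A, hA, B, hB, hAB⟩ := Filter.mem_prod_iff.mp hV
    obtain ⟨a', b', hA'n, hA's⟩ := exists_icc_nhds s₀ hA
    obtain ⟨t₁', t₂', hBn, hBs⟩ := exists_icc_nhds t₀ hB
    refine ⟨t₁', t₂', hBn, ?_⟩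
    rintro t₁ ⟨a₁, b₁, hab₁, H, hHc, hH0, hHp⟩ hle₁ hle₂
    have hbox : ∀ s ∈ Set.Icc a' b', ∀ t ∈ Set.Icc t₁' t₂', F (s, t) ∈ T.baseSet :=
      fun s hs t ht => hAB (Set.mk_mem_prod (hA's hs) (hBs ht))
    set a := a' ⊔ a₁ with ha
    set b := b' ⊓ b₁ with hb
    have hinter : Set.Icc a' b' ∩ Set.Icc a₁ b₁ = Set.Icc a b := Set.Icc_inter_Icc
    have habn : Set.Icc a b ∈ 𝓝 s₀ := by
      rw [← hinter]; exact Filter.inter_mem hA'n hab₁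
    have hsub' : Set.Icc a b ⊆ Set.Icc a' b' := by rw [← hinter]; exact Set.inter_subset_left
    have hsub₁ : Set.Icc a b ⊆ Set.Icc a₁ b₁ := by rw [← hinter]; exact Set.inter_subset_right
    have hs₀ab : s₀ ∈ Set.Icc a b := mem_of_mem_nhds habn
    have hab' : a ≤ b := hs₀ab.1.trans hs₀ab.2
    set bar : I → I := fun s => a ⊔ (s ⊓ b) with hbar
    have hbarc : Continuous bar := continuous_const.max (continuous_id.min continuous_const)
    have hbar_mem : ∀ s, bar s ∈ Set.Icc a b :=
      fun s => ⟨le_sup_left, sup_le hab' inf_le_right⟩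
    have hbar_id : ∀ s ∈ Set.Icc a b, bar s = s := by
      rintro s ⟨h1, h2⟩
      rw [hbar]; dsimp only
      rw [inf_eq_left.mpr h2, sup_eq_right.mpr h1]
    set tbar : I → I := fun t => t₁ ⊔ (t ⊓ t₂') with htbar
    have htbarc : Continuous tbar := continuous_const.max (continuous_id.min continuous_const)
    have htbar_mem : ∀ t, tbar t ∈ Set.Icc t₁' t₂' :=
      fun t => ⟨hle₁.trans le_sup_left, sup_le hle₂ inf_le_right⟩
    -- the points H (bar s, t₁) are in the source of T
    have ht₁mem : t₁ ∈ Set.Icc t₁' t₂' := ⟨hle₁, hle₂⟩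
    have hHt₁src : ∀ s : I, H (bar s, t₁) ∈ T.source := by
      intro s
      rw [T.mem_source, hHp (bar s) (hsub₁ (hbar_mem s)) t₁ le_rfl]
      exact hbox (bar s) (hsub' (hbar_mem s)) t₁ ht₁mem
    have hHt₁c : Continuous fun s : I => H (bar s, t₁) :=
      hHc.comp (hbarc.prodMk continuous_const)
    set c : I → (p ⁻¹' {F (s₀, t₀)}) := fun s => (T (H (bar s, t₁))).2 with hc
    have hcc : Continuous c := by
      have : Continuous fun s : I => T (H (bar s, t₁)) :=
        T.continuousOn_toFun.comp_continuous hHt₁c hHt₁src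
      exact this.snd
    set G : I × I → E := fun q => T.toPartialHomeomorph.symm (F (bar q.1, tbar q.2), c q.1)
      with hG
    have hGmemT : ∀ q : I × I, (F (bar q.1, tbar q.2), c q.1) ∈ T.target := by
      intro q
      rw [T.target_eq]
      exact ⟨hbox _ (hsub' (hbar_mem q.1)) _ (htbar_mem q.2), Set.mem_univ _⟩
    have hGc : Continuous G := by
      apply T.toPartialHomeomorph.continuousOn_symm.comp_continuous
      · exact (hF.comp ((hbarc.comp continuous_fst).prodMk
          (htbarc.comp continuous_snd))).prodMk (hcc.comp continuous_fst)
      · exact hGmemT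
    have hpG : ∀ q : I × I, p (G q) = F (bar q.1, tbar q.2) := by
      intro q
      exact T.proj_symm_apply (by rw [T.target_eq] at hGmemT ⊢; exact hGmemT q)
    set H' : I × I → E := fun q => if q.2 ≤ t₁ then H (bar q.1, q.2) else G q with hH'
    have hfrontier : ∀ q : I × I, q.2 = t₁ → H (bar q.1, q.2) = G q := by
      rintro ⟨s, t⟩ rfl
      show H (bar s, t) = T.toPartialHomeomorph.symm (F (bar s, tbar t), c s)
      have htt : tbar t = t := by
        rw [htbar]; dsimp only
        rw [inf_eq_left.mpr hle₂, sup_idem]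
      rw [htt, ← hHp (bar s) (hsub₁ (hbar_mem s)) t le_rfl, hc]
      exact (T.symm_apply_mk_proj (hHt₁src s)).symm
    have hH'c : Continuous H' := by
      refine Continuous.if_le (hHc.comp ((hbarc.comp continuous_fst).prodMk continuous_snd))
        hGc continuous_snd continuous_const ?_
      intro q hq
      exact hfrontier q hq
    refine ⟨a, b, habn, H', hH'c, ?_, ?_⟩
    · intro s hs
      have h0t₁ : (0:I) ≤ t₁ := t₁.2.1
      show (if (0:I) ≤ t₁ then H (bar s, 0) else G (s, 0)) = e
      rw [if_pos h0t₁, hbar_id s hs]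
      exact hH0 s (hsub₁ hs)
    · intro s hs t' ht'
      show p (if t' ≤ t₁ then H (bar s, t') else G (s, t')) = F (s, t')
      by_cases hcase : t' ≤ t₁
      · rw [if_pos hcase, hbar_id s hs]
        exact hHp s (hsub₁ hs) t' hcase
      · rw [if_neg hcase, hpG, hbar_id s hs]
        congr 1
        have h1 : t₁ ≤ t' := le_of_not_ge hcase
        rw [htbar]; dsimp only
        rw [inf_eq_left.mpr ht', sup_eq_right.mpr h1]
  -- S is open
  have hopen : IsOpen S := by
    rw [isOpen_iff_mem_nhds]
    intro t₀ ht₀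
    obtain ⟨t₁', t₂', hn, hk⟩ := key t₀
    have hmem := mem_of_mem_nhds hn
    have ht₂' : t₂' ∈ S := hk t₀ ht₀ hmem.1 hmem.2
    exact Filter.mem_of_superset hn (fun u hu => hdown hu.2 ht₂')
  -- S is closed
  have hclosed : IsClosed S := by
    rw [← isOpen_compl_iff, isOpen_iff_mem_nhds]
    by_contra hcon
    push_neg at hcon
    obtain ⟨t₀, ht₀, hcl⟩ := hcon
    -- every neighborhood of t₀ meets S
    obtain ⟨t₁', t₂', hn, hk⟩ := key t₀
    have hmem := mem_of_mem_nhds hn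
    have : ¬ (Set.Icc t₁' t₂' ⊆ Sᶜ) := fun h => hcl (Filter.mem_of_superset hn h)
    obtain ⟨u, hu1, hu2⟩ := Set.not_subset.mp this
    rw [Set.notMem_compl_iff] at hu2
    rcases le_total t₀ u with h | h
    · exact ht₀ (hdown h hu2)
    · have ht₂' : t₂' ∈ S := hk u hu2 hu1.1 (h.trans hmem.2)
      exact ht₀ (hdown hmem.2 ht₂')
  have hSuniv : S = Set.univ := IsClopen.eq_univ ⟨hclosed, hopen⟩ ⟨0, h0⟩
  have h1 : (1:I) ∈ S := hSuniv ▸ Set.mem_univ _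
  obtain ⟨a, b, hab, H, hHc, hH0, hHp⟩ := h1
  exact ⟨a, b, hab, H, hHc, hH0, fun s hs t => hHp s hs t t.2.2⟩

/-- Path lifting against a covering map. -/
private lemma liftPath' (hp : IsCoveringMap p) {x₀ x₁ : X} (γ : Path x₀ x₁) (e : E)
    (he : p e = x₀) : ∃ (e₁ : E) (Γ : Path e e₁), ∀ t, p (Γ t) = γ t := by
  obtain ⟨a, b, hab, H, hHc, hH0, hHp⟩ := boxLift hp
    (F := fun q : I × I => γ q.2) (γ.continuous.comp continuous_snd)
    (e := e) (fun s => show γ 0 = p e by rw [γ.source, he]) 0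
  have h0m : (0:I) ∈ Set.Icc a b := mem_of_mem_nhds hab
  refine ⟨H (0, 1), ⟨⟨fun t => H (0, t), hHc.comp (continuous_const.prodMk continuous_id)⟩,
    hH0 0 h0m, rfl⟩, fun t => hHp 0 h0m t⟩

/-- Monodromy: homotopic paths have lifts with the same endpoint. -/
private lemma monodromy (hp : IsCoveringMap p) {x₀ x₁ : X} {γ γ' : Path x₀ x₁}
    (h : γ.Homotopic γ') {e e₁ e₂ : E} (Γ : Path e e₁) (Γ' : Path e e₂)
    (hΓ : ∀ t, p (Γ t) = γ t) (hΓ' : ∀ t, p (Γ' t) = γ' t) : e₁ = e₂ := by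
  obtain ⟨F⟩ := h
  have hpe : p e = x₀ := by rw [← Γ.source, hΓ 0, γ.source]
  have hFc : Continuous fun q : I × I => F q := F.continuous
  -- the family of paths
  have hsrc : ∀ s : I, F (s, 0) = x₀ := fun s => F.source s
  have htgt : ∀ s : I, F (s, 1) = x₁ := fun s => F.target s
  have hex : ∀ s : I, ∃ (w : E) (Γs : Path e w), ∀ t, p (Γs t) = F (s, t) := by
    intro s
    exact liftPath' hp ⟨⟨fun t => F (s, t),
      hFc.comp (continuous_const.prodMk continuous_id)⟩, hsrc s, htgt s⟩ e hpe
  choose φ Γs hΓs using hex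
  -- φ is locally constant
  have hloc : ∀ s₀ : I, ∀ᶠ s in 𝓝 s₀, φ s = φ s₀ := by
    intro s₀
    obtain ⟨a, b, hab, H, hHc, hH0, hHp⟩ := boxLift hp hFc
      (e := e) (fun s => by rw [hsrc, hpe]) s₀
    have hs₀m : s₀ ∈ Set.Icc a b := mem_of_mem_nhds hab
    have key2 : ∀ s ∈ Set.Icc a b, φ s = H (s, 1) := by
      intro s hs
      have hequ : (fun t : I => (Γs s) t) = fun t : I => H (s, t) := by
        refine hp.eq_of_comp_eq ((Γs s).continuous)
          (hHc.comp (continuous_const.prodMk continuous_id)) ?_ 0 ?_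
        · funext t
          show p ((Γs s) t) = p (H (s, t))
          rw [hΓs s t, hHp s hs t]
        · show (Γs s) 0 = H (s, 0)
          rw [(Γs s).source, hH0 s hs]
      have := congrFun hequ 1
      rwa [(Γs s).target] at this
    have hconst : ∀ s ∈ Set.Icc a b, H (s, 1) = H (s₀, 1) := by
      have := hp.eqOn_of_comp_eqOn (icc_preconn a b)
        (Continuous.continuousOn (hHc.comp (continuous_id.prodMk continuous_const)))
        (continuousOn_const (c := H (s₀, 1)))
        (fun s hs => by
          show p (H (s, 1)) = p (H (s₀, 1))
          rw [hHp s hs 1, hHp s₀ hs₀m 1, htgt, htgt])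
        hs₀m rfl
      exact fun s hs => this hs
    exact Filter.eventually_of_mem hab (fun s hs => by
      rw [key2 s hs, key2 s₀ hs₀m, hconst s hs])
  have hlc : IsLocallyConstant φ := (IsLocallyConstant.iff_eventually_eq φ).mpr hloc
  have h01 : φ 0 = φ 1 := hlc.apply_eq_of_preconnectedSpace 0 1
  -- identify φ 0 with e₁ and φ 1 with e₂
  have h0 : φ 0 = e₁ := by
    have hequ : (fun t : I => (Γs 0) t) = fun t : I => Γ t := by
      refine hp.eq_of_comp_eq ((Γs 0).continuous) Γ.continuous ?_ 0 ?_
      · funext t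
        show p ((Γs 0) t) = p (Γ t)
        rw [hΓs 0 t, hΓ t]
        exact F.apply_zero t
      · show (Γs 0) 0 = Γ 0
        rw [(Γs 0).source, Γ.source]
    have := congrFun hequ 1
    rwa [(Γs 0).target, Γ.target] at this
  have h1 : φ 1 = e₂ := by
    have hequ : (fun t : I => (Γs 1) t) = fun t : I => Γ' t := by
      refine hp.eq_of_comp_eq ((Γs 1).continuous) Γ'.continuous ?_ 0 ?_
      · funext t
        show p ((Γs 1) t) = p (Γ' t)
        rw [hΓs 1 t, hΓ' t]
        exact F.apply_one t
      · show (Γs 1) 0 = Γ' 0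
        rw [(Γs 1).source, Γ'.source]
    have := congrFun hequ 1
    rwa [(Γs 1).target, Γ'.target] at this
  rw [← h0, h01, h1]

end CoveringLifting

/-- **Surjectivity on fundamental groups makes the pullback of a connected
covering connected** (fact invoked in Section 4 of the paper). Let
`f : Y → X` be continuous with `Y` path-connected, and `p : E → X` a covering
map with `E` path-connected; fix `y₀ ∈ Y`, `e₀ ∈ E` with `p e₀ = f y₀`. If
the induced homomorphism `f₊ : π₁(Y, y₀) → π₁(X, f y₀)` is surjective (every
loop in `X` at `f y₀` is homotopic to the image of a loop in `Y` at `y₀`),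
then the pullback `{(y, e) : f y = p e}` is path-connected. -/
theorem pullback_pathConnected_of_surjective_pi1
    {Y X E : Type*} [TopologicalSpace Y] [TopologicalSpace X] [TopologicalSpace E]
    [PathConnectedSpace Y] [PathConnectedSpace E]
    (f : Y → X) (hf : Continuous f)
    (p : E → X) (hp : IsCoveringMap p) (hpsurj : Function.Surjective p)
    (y₀ : Y) (e₀ : E) (he₀ : p e₀ = f y₀)
    (hsurj : ∀ α : Path (f y₀) (f y₀),
      ∃ β : Path y₀ y₀, (β.map hf).Homotopic α) :
    IsPathConnected {q : Y × E | f q.1 = p q.2} := by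
  refine ⟨(y₀, e₀), he₀.symm, ?_⟩
  rintro ⟨y, e⟩ (hye : f y = p e)
  -- paths in Y and E
  have γ : Path y₀ y := PathConnectedSpace.somePath y₀ y
  have σE : Path e₀ e := PathConnectedSpace.somePath e₀ e
  -- the loop α = (p ∘ σE) · (f ∘ γ)⁻¹ at f y₀
  set σ' : Path (f y₀) (f y) := (σE.map hp.continuous).cast he₀.symm hye with hσ'
  set α : Path (f y₀) (f y₀) := σ'.trans (γ.map hf).symm with hα
  obtain ⟨β, hβhom⟩ := hsurj α
  -- lift of (f ∘ γ).symm starting at e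
  obtain ⟨eΛ, Λ, hΛ⟩ := liftPath' hp (γ.map hf).symm e hye.symm
  -- lift of f ∘ β starting at e₀
  obtain ⟨e₁, Γβ, hΓβ⟩ := liftPath' hp (β.map hf) e₀ he₀
  -- σE.trans Λ is a lift of α
  have hliftα : ∀ t, p ((σE.trans Λ) t) = α t := by
    intro t
    rw [hα, Path.trans_apply, Path.trans_apply]
    split_ifs with h
    · show p (σE _) = σ' _
      rw [hσ']
      rfl
    · exact hΛ _
  -- monodromy: e₁ = eΛ
  have hee : e₁ = eΛ := monodromy hp hβhom Γβ (σE.trans Λ) hΓβ hliftα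
  -- assemble the lift of f ∘ (β.trans γ)
  set M : Path e₁ e := (Λ.symm).cast hee rfl with hM
  have hM' : ∀ u, p (M u) = f (γ u) := by
    intro u
    rw [hM]
    show p (Λ.symm u) = f (γ u)
    rw [Path.symm_apply]
    show p (Λ (σ u)) = f (γ u)
    rw [hΛ (σ u), Path.symm_apply]
    show f (γ (σ (σ u))) = f (γ u)
    rw [unitInterval.symm_symm]
  set Γ : Path e₀ e := Γβ.trans M with hΓdef
  set η : Path y₀ y := β.trans γ with hη
  have hkey : ∀ t, f (η t) = p (Γ t) := by
    intro t
    rw [hΓdef, hη, Path.trans_apply, Path.trans_apply]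
    split_ifs with h
    · exact (hΓβ _).symm
    · exact (hM' _).symm
  exact ⟨η.prod Γ, fun t => by
    show f ((η.prod Γ) t).1 = p ((η.prod Γ) t).2
    rw [Path.prod_coe]
    exact hkey t⟩
end
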